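/- Run OpConEx for T ≥ 1 iterations with step sizes satisfying condition (C). Then: (i) for every x ∈ X̃, Γ_T·⟨F(x), x̄^T − x⟩ ≤ (γ₀η₀/2)‖x − x⁰‖² + M_T(0); and (ii) Γ_T·‖[g(x̄^T)]_+‖ ≤ (γ₀η₀/2)‖x* − x⁰‖² + (γ₀τ₀/2)(‖λ*‖+1)² + M_T(‖λ*‖+1). -/

import Mathlib

open scoped InnerProductSpace BigOperators

noncomputable section

/-- ℝ^k with the Euclidean norm. -/
abbrev Euc (k : ℕ) := EuclideanSpace ℝ (Fin k)

/-- `∇g(x)ᵀ d`, where `G j` is the j-th column of `∇g(x)`. -/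
def gradT {m : ℕ} {E : Type*} [NormedAddCommGroup E] [InnerProductSpace ℝ E]
    (G : Fin m → E) (d : E) : Euc m :=
  (EuclideanSpace.equiv (Fin m) ℝ).symm fun j => ⟪G j, d⟫_ℝ

/-- `∇g(x) μ`, where `G j` is the j-th column of `∇g(x)`. -/
def gradMul {m : ℕ} {E : Type*} [NormedAddCommGroup E] [InnerProductSpace ℝ E]
    (G : Fin m → E) (μ : Euc m) : E :=
  ∑ j, μ j • G j

/-- componentwise positive part `[v]₊`. -/
def posPart {m : ℕ} (v : Euc m) : Euc m :=
  (EuclideanSpace.equiv (Fin m) ℝ).symm fun j => max (v j) 0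

/-- The quantity `M_T(a)` from Lemma 2.2 (OpConEx working bound). -/
def opconexMT {n m : ℕ} (γ η τ θ : ℕ → ℝ) (Lg Hg : ℝ)
    (F : Euc n → Euc n) (x xm : ℕ → Euc n) (lam : ℕ → Euc m)
    (ell ellm : ℕ → Euc m) (T : ℕ) (a : ℝ) : ℝ :=
  (∑ t ∈ Finset.range T,
      (γ t * θ t * ⟪F (x t) - F (xm t), x t - x (t + 1)⟫_ℝ
        + γ t * θ t * ⟪ell t - ellm t, lam (t + 1) - lam t⟫_ℝ
        - γ t * (η t - Lg * a) / 2 * ‖x (t + 1) - x t‖ ^ 2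
        - γ t * τ t / 2 * ‖lam t - lam (t + 1)‖ ^ 2
        + a * Hg * γ t * ‖x (t + 1) - x t‖))
    + γ (T - 1) / (2 * η (T - 1)) * ‖F (x T) - F (xm T)‖ ^ 2
    + γ (T - 1) / (2 * τ (T - 1)) * ‖ell T - ellm T‖ ^ 2


lemma gradT_apply {m : ℕ} {E : Type*} [NormedAddCommGroup E] [InnerProductSpace ℝ E]
    (G : Fin m → E) (d : E) (j : Fin m) : gradT G d j = ⟪G j, d⟫_ℝ := rfl

lemma euc_inner_eq {k : ℕ} (u v : Euc k) : ⟪u, v⟫_ℝ = ∑ j, u j * v j := by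
  simp [PiLp.inner_apply, RCLike.inner_apply]
  exact Finset.sum_congr rfl fun j _ => mul_comm _ _

lemma inner_gradMul {m : ℕ} {E : Type*} [NormedAddCommGroup E] [InnerProductSpace ℝ E]
    (G : Fin m → E) (μ : Euc m) (d : E) :
    ⟪gradMul G μ, d⟫_ℝ = ⟪μ, gradT G d⟫_ℝ := by
  rw [euc_inner_eq, gradMul, sum_inner]
  exact Finset.sum_congr rfl fun j _ => by rw [real_inner_smul_left, gradT_apply]

lemma euc_inner_mono {k : ℕ} {u v w : Euc k} (hu : ∀ j, 0 ≤ u j) (h : ∀ j, v j ≤ w j) :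
    ⟪u, v⟫_ℝ ≤ ⟪u, w⟫_ℝ := by
  rw [euc_inner_eq, euc_inner_eq]
  exact Finset.sum_le_sum fun j _ => mul_le_mul_of_nonneg_left (h j) (hu j)

lemma three_point {E : Type*} [NormedAddCommGroup E] [InnerProductSpace ℝ E]
    {S : Set E} (hS : Convex ℝ S) (c w u : E) {β : ℝ} (hβ : 0 < β) (hu : u ∈ S)
    (hmin : ∀ y ∈ S, ⟪c, u⟫_ℝ + β / 2 * ‖u - w‖ ^ 2 ≤ ⟪c, y⟫_ℝ + β / 2 * ‖y - w‖ ^ 2)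
    (y : E) (hy : y ∈ S) :
    ⟪c, u - y⟫_ℝ ≤ β / 2 * (‖y - w‖ ^ 2 - ‖u - w‖ ^ 2 - ‖y - u‖ ^ 2) := by
  have key : ∀ α : ℝ, 0 < α → α ≤ 1 →
      0 ≤ ⟪c, y - u⟫_ℝ + β * ⟪u - w, y - u⟫_ℝ + β / 2 * α * ‖y - u‖ ^ 2 := by
    intro α hα hα1
    have hz := hmin _ (hS.add_smul_sub_mem hu hy ⟨hα.le, hα1⟩)
    have e1 : ⟪c, u + α • (y - u)⟫_ℝ = ⟪c, u⟫_ℝ + α * ⟪c, y - u⟫_ℝ := by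
      rw [inner_add_right, real_inner_smul_right]
    have e2 : ‖u + α • (y - u) - w‖ ^ 2
        = ‖u - w‖ ^ 2 + 2 * α * ⟪u - w, y - u⟫_ℝ + α ^ 2 * ‖y - u‖ ^ 2 := by
      have : u + α • (y - u) - w = (u - w) + α • (y - u) := by abel
      rw [this, norm_add_sq_real, real_inner_smul_right, norm_smul]
      simp [abs_of_pos hα, mul_pow]
      ring
    rw [e1, e2] at hz
    have h3 : 0 ≤ α * (⟪c, y - u⟫_ℝ + β * ⟪u - w, y - u⟫_ℝ + β / 2 * α * ‖y - u‖ ^ 2) := by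
      nlinarith
    have := (mul_nonneg_iff_of_pos_left hα).mp h3
    linarith
  have hVI : 0 ≤ ⟪c, y - u⟫_ℝ + β * ⟪u - w, y - u⟫_ℝ := by
    by_contra hneg
    push_neg at hneg
    have hC0 : 0 ≤ β / 2 * ‖y - u‖ ^ 2 := by positivity
    rcases eq_or_lt_of_le hC0 with h0 | hpos
    · have hk := key 1 one_pos le_rfl
      nlinarith
    · set A := ⟪c, y - u⟫_ℝ + β * ⟪u - w, y - u⟫_ℝ with hA
      set C := β / 2 * ‖y - u‖ ^ 2 with hC
      have hαpos : 0 < min 1 (-A / (2 * C)) := by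
        apply lt_min one_pos
        apply div_pos (by linarith) (by linarith)
      have hk := key _ hαpos (min_le_left _ _)
      have he : β / 2 * (min 1 (-A / (2 * C))) * ‖y - u‖ ^ 2 = C * min 1 (-A / (2 * C)) := by
        rw [hC]; ring
      rw [he] at hk
      have h2 : C * min 1 (-A / (2 * C)) ≤ C * (-A / (2 * C)) :=
        mul_le_mul_of_nonneg_left (min_le_right _ _) hC0
      have hCA : C * (-A / (2 * C)) = -A / 2 := by
        field_simp
      linarith
  have hexp : ‖y - w‖ ^ 2 = ‖u - w‖ ^ 2 + 2 * ⟪u - w, y - u⟫_ℝ + ‖y - u‖ ^ 2 := by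
    have : y - w = (u - w) + (y - u) := by abel
    rw [this, norm_add_sq_real]
  have : ⟪c, u - y⟫_ℝ = - ⟪c, y - u⟫_ℝ := by
    rw [← inner_neg_right]; congr 1; abel
  rw [this]
  nlinarith [hVI, hexp]

lemma young_aux (a b c : ℝ) (hc : 0 < c) : a * b ≤ a ^ 2 / (2 * c) + c / 2 * b ^ 2 := by
  have h := sq_nonneg (a - c * b)
  have h2 : 2 * c * (a * b) ≤ a ^ 2 + c ^ 2 * b ^ 2 := by nlinarith
  have h3 : a * b = 2 * c * (a * b) / (2 * c) := by field_simp
  rw [h3, div_le_iff₀ (by positivity : (0:ℝ) < 2 * c)]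
  have e : (a ^ 2 / (2 * c) + c / 2 * b ^ 2) * (2 * c) = a ^ 2 + c ^ 2 * b ^ 2 := by
    field_simp
  rw [e]
  exact h2

set_option maxHeartbeats 2000000 in
/-- **Lemma 2.2 of the paper.** Working bound for the OpConEx method under the
step-size condition (C). -/
theorem opconex_working_bound
    {n m : ℕ}
    (X : Set (Euc n)) (hXne : X.Nonempty) (hXcomp : IsCompact X) (hXconv : Convex ℝ X)
    (F : Euc n → Euc n) (L H : ℝ) (hL : 0 ≤ L) (hH : 0 ≤ H)
    (hFmono : ∀ x₁ ∈ X, ∀ x₂ ∈ X, 0 ≤ ⟪F x₁ - F x₂, x₁ - x₂⟫_ℝ)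
    (hFlip : ∀ x₁ ∈ X, ∀ x₂ ∈ X, ‖F x₁ - F x₂‖ ≤ L * ‖x₁ - x₂‖ + H)
    (g : Euc n → Euc m) (Gg : Euc n → Fin m → Euc n)
    (Mg Lg Hg : ℝ) (hMg : 0 ≤ Mg) (hLg : 0 ≤ Lg) (hHg : 0 ≤ Hg)
    (hgconv : ∀ x ∈ X, ∀ y ∈ X, ∀ j, g x j + ⟪Gg x j, y - x⟫_ℝ ≤ g y j)
    (hglip : ∀ x₁ ∈ X, ∀ x₂ ∈ X, ‖g x₁ - g x₂‖ ≤ Mg * ‖x₁ - x₂‖)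
    (hGgbd : ∀ x ∈ X, ∀ μ : Euc m, ‖gradMul (Gg x) μ‖ ≤ Mg * ‖μ‖)
    (hgsmooth : ∀ x₁ ∈ X, ∀ x₂ ∈ X,
      ‖g x₁ - g x₂ - gradT (Gg x₂) (x₁ - x₂)‖ ≤ Lg / 2 * ‖x₁ - x₂‖ ^ 2 + Hg * ‖x₁ - x₂‖)
    (hXtne : ∃ x ∈ X, ∀ j, g x j ≤ 0)
    (xstar : Euc n) (lamstar : Euc m) (hxstar : xstar ∈ X) (hlamstar : ∀ j, 0 ≤ lamstar j)
    (hsaddle₁ : ∀ x ∈ X,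
      ⟪F xstar, xstar⟫_ℝ + ⟪lamstar, g xstar⟫_ℝ ≤ ⟪F xstar, x⟫_ℝ + ⟪lamstar, g x⟫_ℝ)
    (hsaddle₂ : ∀ lam' : Euc m, (∀ j, 0 ≤ lam' j) →
      ⟪lam', g xstar⟫_ℝ ≤ ⟪lamstar, g xstar⟫_ℝ)
    (T : ℕ) (hT : 1 ≤ T)
    (γ η τ θ : ℕ → ℝ)
    (hγ : ∀ t, 0 < γ t) (hη : ∀ t, 0 < η t) (hτ : ∀ t, 0 < τ t) (hθ : ∀ t, 0 ≤ θ t)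
    (hC₁ : ∀ t, γ (t + 1) * η (t + 1) ≤ γ t * η t)
    (hC₂ : ∀ t, γ (t + 1) * τ (t + 1) ≤ γ t * τ t)
    (hC₃ : ∀ t, γ (t + 1) * θ (t + 1) = γ t)
    (x xm : ℕ → Euc n) (lam : ℕ → Euc m) (ell ellm : ℕ → Euc m)
    (hx0 : x 0 ∈ X) (hxm0 : xm 0 = x 0) (hxm : ∀ t, xm (t + 1) = x t)
    (hlam0 : lam 0 = 0)
    (hell0 : ell 0 = g (x 0))
    (hell : ∀ t, ell (t + 1) = g (x t) + gradT (Gg (x t)) (x (t + 1) - x t))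
    (hellm0 : ellm 0 = g (x 0)) (hellm : ∀ t, ellm (t + 1) = ell t)
    (hlamPos : ∀ t, ∀ j, 0 ≤ lam (t + 1) j)
    (hlamMin : ∀ t, ∀ lam' : Euc m, (∀ j, 0 ≤ lam' j) →
      ⟪-((1 + θ t) • ell t - θ t • ellm t), lam (t + 1)⟫_ℝ
          + τ t / 2 * ‖lam (t + 1) - lam t‖ ^ 2
        ≤ ⟪-((1 + θ t) • ell t - θ t • ellm t), lam'⟫_ℝ
          + τ t / 2 * ‖lam' - lam t‖ ^ 2)
    (hxS : ∀ t, x (t + 1) ∈ X)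
    (hxMin : ∀ t, ∀ y ∈ X,
      ⟪(1 + θ t) • F (x t) - θ t • F (xm t) + gradMul (Gg (x t)) (lam (t + 1)),
          x (t + 1)⟫_ℝ + η t / 2 * ‖x (t + 1) - x t‖ ^ 2
        ≤ ⟪(1 + θ t) • F (x t) - θ t • F (xm t) + gradMul (Gg (x t)) (lam (t + 1)),
          y⟫_ℝ + η t / 2 * ‖y - x t‖ ^ 2) :
    (∀ z ∈ X, (∀ j, g z j ≤ 0) →
      (∑ t ∈ Finset.range T, γ t) *
          ⟪F z, (∑ t ∈ Finset.range T, γ t)⁻¹ • (∑ t ∈ Finset.range T, γ t • x (t + 1)) - z⟫_ℝ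
        ≤ γ 0 * η 0 / 2 * ‖z - x 0‖ ^ 2
          + opconexMT γ η τ θ Lg Hg F x xm lam ell ellm T 0)
    ∧ (∑ t ∈ Finset.range T, γ t) *
          ‖posPart (g ((∑ t ∈ Finset.range T, γ t)⁻¹ • (∑ t ∈ Finset.range T, γ t • x (t + 1))))‖
        ≤ γ 0 * η 0 / 2 * ‖xstar - x 0‖ ^ 2 + γ 0 * τ 0 / 2 * (‖lamstar‖ + 1) ^ 2
          + opconexMT γ η τ θ Lg Hg F x xm lam ell ellm T (‖lamstar‖ + 1) := by

  have hxX : ∀ t, x t ∈ X := by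
    intro t
    cases t with
    | zero => exact hx0
    | succ s => exact hxS s
  set Γ : ℝ := ∑ t ∈ Finset.range T, γ t with hΓdef
  have hΓpos : 0 < Γ :=
    Finset.sum_pos (fun t _ => hγ t) (Finset.nonempty_range_iff.mpr (by omega))
  set xb : Euc n := Γ⁻¹ • ∑ t ∈ Finset.range T, γ t • x (t + 1) with hxbdef
  have hsum_xb : ∑ t ∈ Finset.range T, γ t • x (t + 1) = Γ • xb := by
    rw [hxbdef, smul_smul, mul_inv_cancel₀ (ne_of_gt hΓpos), one_smul]
  have hxbX : xb ∈ X := by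
    rw [hxbdef, Finset.smul_sum]
    simp_rw [smul_smul]
    refine hXconv.sum_mem (fun t _ => mul_nonneg (inv_nonneg.mpr hΓpos.le) (hγ t).le) ?_
      (fun t _ => hxS t)
    rw [← Finset.mul_sum, ← hΓdef, inv_mul_cancel₀ (ne_of_gt hΓpos)]
  clear_value xb Γ
  have hOrth : Convex ℝ {v : Euc m | ∀ j, 0 ≤ v j} := by
    intro p1 hp1 p2 hp2 s1 s2 hs1 hs2 hs12 j
    have e : (s1 • p1 + s2 • p2) j = s1 * p1 j + s2 * p2 j := rfl
    rw [Set.mem_setOf_eq] at hp1 hp2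
    exact le_of_le_of_eq (add_nonneg (mul_nonneg hs1 (hp1 j)) (mul_nonneg hs2 (hp2 j))) e.symm
  have hA : ∀ t, ∀ z ∈ X,
      ⟪(1 + θ t) • F (x t) - θ t • F (xm t) + gradMul (Gg (x t)) (lam (t + 1)),
        x (t + 1) - z⟫_ℝ
        ≤ η t / 2 * (‖z - x t‖ ^ 2 - ‖x (t + 1) - x t‖ ^ 2 - ‖z - x (t + 1)‖ ^ 2) :=
    fun t z hz =>
      three_point hXconv _ (x t) (x (t + 1)) (hη t) (hxS t) (fun y hy => hxMin t y hy) z hz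
  have hB : ∀ t, ∀ l : Euc m, (∀ j, 0 ≤ l j) →
      ⟪-((1 + θ t) • ell t - θ t • ellm t), lam (t + 1) - l⟫_ℝ
        ≤ τ t / 2 * (‖l - lam t‖ ^ 2 - ‖lam (t + 1) - lam t‖ ^ 2 - ‖l - lam (t + 1)‖ ^ 2) :=
    fun t l hl =>
      three_point hOrth _ (lam t) (lam (t + 1)) (hτ t) (hlamPos t) (fun y hy => hlamMin t y hy) l hl
  have hΓF : ∀ z : Euc n, Γ * ⟪F z, xb - z⟫_ℝ
      = ∑ t ∈ Finset.range T, γ t * ⟪F z, x (t + 1) - z⟫_ℝ := by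
    intro z
    have e1 : ∀ t, γ t * ⟪F z, x (t + 1) - z⟫_ℝ
        = ⟪F z, γ t • x (t + 1)⟫_ℝ - γ t * ⟪F z, z⟫_ℝ := by
      intro t
      rw [real_inner_smul_right, inner_sub_right]
      ring
    simp_rw [e1]
    rw [Finset.sum_sub_distrib, ← inner_sum, hsum_xb, real_inner_smul_right,
      ← Finset.sum_mul, ← hΓdef, inner_sub_right]
    ring
  have hmη : ∀ t, γ t * η t ≤ γ (t - 1) * η (t - 1) := by
    intro t
    cases t with
    | zero => exact le_rfl
    | succ s => simpa using hC₁ s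
  have hmτ : ∀ t, γ t * τ t ≤ γ (t - 1) * τ (t - 1) := by
    intro t
    cases t with
    | zero => exact le_rfl
    | succ s => simpa using hC₂ s
  -- the master bound
  have key : ∀ z ∈ X, ∀ l : Euc m, (∀ j, 0 ≤ l j) →
      (∑ t ∈ Finset.range T, γ t *
          (⟪F (x (t + 1)), x (t + 1) - z⟫_ℝ + ⟪l, ell (t + 1)⟫_ℝ - ⟪lam (t + 1), g z⟫_ℝ))
        ≤ γ 0 * η 0 / 2 * ‖z - x 0‖ ^ 2 + γ 0 * τ 0 / 2 * ‖l‖ ^ 2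
          + opconexMT γ η τ θ Lg Hg F x xm lam ell ellm T 0 := by
    intro z hz l hl
    set E : ℕ → ℝ := fun t =>
      ⟪F (x t) - F (xm t), x t - z⟫_ℝ + ⟪l - lam t, ell t - ellm t⟫_ℝ with hEdef
    clear_value E
    have hE0 : E 0 = 0 := by
      simp [hEdef, hxm0, hell0, hellm0]
    have perT : ∀ t,
        ⟪F (x (t + 1)), x (t + 1) - z⟫_ℝ + ⟪l, ell (t + 1)⟫_ℝ - ⟪lam (t + 1), g z⟫_ℝ
          ≤ (E (t + 1) - θ t * E t)
            + θ t * ⟪F (x t) - F (xm t), x t - x (t + 1)⟫_ℝ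
            + θ t * ⟪ell t - ellm t, lam (t + 1) - lam t⟫_ℝ
            + η t / 2 * (‖z - x t‖ ^ 2 - ‖x (t + 1) - x t‖ ^ 2 - ‖z - x (t + 1)‖ ^ 2)
            + τ t / 2 * (‖l - lam t‖ ^ 2 - ‖lam (t + 1) - lam t‖ ^ 2 - ‖l - lam (t + 1)‖ ^ 2) := by
      intro t
      have hAt := hA t z hz
      have hBt := hB t l hl
      have eI1 : ⟪(1 + θ t) • F (x t) - θ t • F (xm t) + gradMul (Gg (x t)) (lam (t + 1)),
          x (t + 1) - z⟫_ℝ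
          = ⟪F (x t), x (t + 1) - z⟫_ℝ + θ t * ⟪F (x t) - F (xm t), x (t + 1) - z⟫_ℝ
            + ⟪gradMul (Gg (x t)) (lam (t + 1)), x (t + 1) - z⟫_ℝ := by
        simp only [inner_add_left, inner_sub_left, real_inner_smul_left]
        ring
      rw [eI1] at hAt
      have e2 : gradT (Gg (x t)) (x (t + 1) - x t) = ell (t + 1) - g (x t) := by
        rw [hell t]; abel
      have e3 : ⟪lam (t + 1), gradT (Gg (x t)) (z - x t)⟫_ℝ
          ≤ ⟪lam (t + 1), g z⟫_ℝ - ⟪lam (t + 1), g (x t)⟫_ℝ := by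
        rw [← inner_sub_right]
        refine euc_inner_mono (hlamPos t) fun j => ?_
        have h := hgconv (x t) (hxX t) z hz j
        have e4 : gradT (Gg (x t)) (z - x t) j = ⟪Gg (x t) j, z - x t⟫_ℝ := rfl
        have e5 : (g z - g (x t)) j = g z j - g (x t) j := rfl
        rw [e4, e5]
        linarith
      have hgrad : ⟪lam (t + 1), ell (t + 1)⟫_ℝ - ⟪lam (t + 1), g z⟫_ℝ
          ≤ ⟪gradMul (Gg (x t)) (lam (t + 1)), x (t + 1) - z⟫_ℝ := by
        have e0 : x (t + 1) - z = (x (t + 1) - x t) - (z - x t) := by abel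
        have e6 : ⟪gradMul (Gg (x t)) (lam (t + 1)), x (t + 1) - z⟫_ℝ
            = ⟪lam (t + 1), ell (t + 1) - g (x t)⟫_ℝ
              - ⟪lam (t + 1), gradT (Gg (x t)) (z - x t)⟫_ℝ := by
          rw [e0, inner_sub_right, inner_gradMul, inner_gradMul, e2]
        rw [e6, inner_sub_right]
        linarith
      have eI4 : ⟪-((1 + θ t) • ell t - θ t • ellm t), lam (t + 1) - l⟫_ℝ
          = -(⟪lam (t + 1), ell t⟫_ℝ - ⟪l, ell t⟫_ℝ)
            - θ t * (⟪lam (t + 1), ell t⟫_ℝ - ⟪lam (t + 1), ellm t⟫_ℝ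
                - (⟪l, ell t⟫_ℝ - ⟪l, ellm t⟫_ℝ)) := by
        rw [real_inner_comm]
        simp only [inner_neg_right, inner_sub_right, inner_add_right, inner_sub_left,
          real_inner_smul_right]
        ring
      rw [eI4] at hBt
      have dE1 : E (t + 1) = ⟪F (x (t + 1)) - F (xm (t + 1)), x (t + 1) - z⟫_ℝ
          + (⟪l, ell (t + 1)⟫_ℝ - ⟪l, ell t⟫_ℝ
            - (⟪lam (t + 1), ell (t + 1)⟫_ℝ - ⟪lam (t + 1), ell t⟫_ℝ)) := by
        simp only [hEdef]
        rw [hellm t]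
        congr 1
        simp only [inner_sub_left, inner_sub_right]
        ring
      have eF' : ⟪F (x (t + 1)) - F (xm (t + 1)), x (t + 1) - z⟫_ℝ
          = ⟪F (x (t + 1)), x (t + 1) - z⟫_ℝ - ⟪F (x t), x (t + 1) - z⟫_ℝ := by
        rw [hxm t, inner_sub_left]
      have dE0θ : θ t * E t = θ t * ⟪F (x t) - F (xm t), x t - z⟫_ℝ
          + θ t * (⟪l, ell t⟫_ℝ - ⟪l, ellm t⟫_ℝ - (⟪lam t, ell t⟫_ℝ - ⟪lam t, ellm t⟫_ℝ)) := by
        simp only [hEdef]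
        rw [show ⟪l - lam t, ell t - ellm t⟫_ℝ
            = ⟪l, ell t⟫_ℝ - ⟪l, ellm t⟫_ℝ - (⟪lam t, ell t⟫_ℝ - ⟪lam t, ellm t⟫_ℝ) from by
          simp only [inner_sub_left, inner_sub_right]
          ring]
        ring
      have eFθ : θ t * ⟪F (x t) - F (xm t), x (t + 1) - z⟫_ℝ
          = θ t * ⟪F (x t) - F (xm t), x t - z⟫_ℝ
            - θ t * ⟪F (x t) - F (xm t), x t - x (t + 1)⟫_ℝ := by
        rw [show ⟪F (x t) - F (xm t), x (t + 1) - z⟫_ℝ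
            = ⟪F (x t) - F (xm t), x t - z⟫_ℝ - ⟪F (x t) - F (xm t), x t - x (t + 1)⟫_ℝ from by
          rw [← inner_sub_right]
          congr 1
          abel]
        ring
      have eq3θ : θ t * ⟪ell t - ellm t, lam (t + 1) - lam t⟫_ℝ
          = θ t * (⟪lam (t + 1), ell t⟫_ℝ - ⟪lam (t + 1), ellm t⟫_ℝ
              - (⟪lam t, ell t⟫_ℝ - ⟪lam t, ellm t⟫_ℝ)) := by
        rw [show ⟪ell t - ellm t, lam (t + 1) - lam t⟫_ℝ
            = ⟪lam (t + 1), ell t⟫_ℝ - ⟪lam (t + 1), ellm t⟫_ℝ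
              - (⟪lam t, ell t⟫_ℝ - ⟪lam t, ellm t⟫_ℝ) from by
          rw [real_inner_comm]
          simp only [inner_sub_left, inner_sub_right]
          ring]
      simp only [hEdef] at dE1 dE0θ ⊢
      linarith [hAt, hBt, hgrad, dE1, eF', dE0θ, eFθ, eq3θ]
    have hperγ : ∀ t ∈ Finset.range T, γ t *
        (⟪F (x (t + 1)), x (t + 1) - z⟫_ℝ + ⟪l, ell (t + 1)⟫_ℝ - ⟪lam (t + 1), g z⟫_ℝ)
        ≤ (γ t * E (t + 1) - γ t * θ t * E t)
          + (γ t * θ t * ⟪F (x t) - F (xm t), x t - x (t + 1)⟫_ℝ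
            + γ t * θ t * ⟪ell t - ellm t, lam (t + 1) - lam t⟫_ℝ
            - γ t * (η t - Lg * 0) / 2 * ‖x (t + 1) - x t‖ ^ 2
            - γ t * τ t / 2 * ‖lam t - lam (t + 1)‖ ^ 2
            + 0 * Hg * γ t * ‖x (t + 1) - x t‖)
          + (γ t * (η t / 2) * (‖z - x t‖ ^ 2 - ‖z - x (t + 1)‖ ^ 2))
          + (γ t * (τ t / 2) * (‖l - lam t‖ ^ 2 - ‖l - lam (t + 1)‖ ^ 2)) := by
      intro t _
      refine (mul_le_mul_of_nonneg_left (perT t) (hγ t).le).trans (le_of_eq ?_)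
      rw [norm_sub_rev (lam t) (lam (t + 1))]
      ring
    have hsum := Finset.sum_le_sum hperγ
    rw [Finset.sum_add_distrib, Finset.sum_add_distrib, Finset.sum_add_distrib] at hsum
    have sum1 : ∑ t ∈ Finset.range T, (γ t * E (t + 1) - γ t * θ t * E t)
        = γ (T - 1) * E T := by
      have hcongr : ∀ t ∈ Finset.range T,
          γ t * E (t + 1) - γ t * θ t * E t
            = γ ((t + 1) - 1) * E (t + 1) - γ (t - 1) * E t := by
        intro t _
        cases t with
        | zero => simp [hE0]
        | succ s =>
          simp only [Nat.add_sub_cancel]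
          rw [hC₃ s]
      have h3 := Finset.sum_range_sub (fun s => γ (s - 1) * E s) T
      beta_reduce at h3
      rw [Finset.sum_congr rfl hcongr, h3]
      norm_num [hE0]
    have sum2 : ∑ t ∈ Finset.range T, γ t * (η t / 2) * (‖z - x t‖ ^ 2 - ‖z - x (t + 1)‖ ^ 2)
        ≤ γ 0 * η 0 / 2 * ‖z - x 0‖ ^ 2 - γ (T - 1) * η (T - 1) / 2 * ‖z - x T‖ ^ 2 := by
      have hle : ∀ t ∈ Finset.range T,
          γ t * (η t / 2) * (‖z - x t‖ ^ 2 - ‖z - x (t + 1)‖ ^ 2)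
            ≤ γ (t - 1) * η (t - 1) / 2 * ‖z - x t‖ ^ 2
              - γ ((t + 1) - 1) * η ((t + 1) - 1) / 2 * ‖z - x (t + 1)‖ ^ 2 := by
        intro t _
        simp only [Nat.add_sub_cancel]
        nlinarith [mul_nonneg (sub_nonneg.mpr (hmη t)) (sq_nonneg ‖z - x t‖)]
      have h3 := Finset.sum_range_sub' (fun s => γ (s - 1) * η (s - 1) / 2 * ‖z - x s‖ ^ 2) T
      beta_reduce at h3
      refine (Finset.sum_le_sum hle).trans (le_of_eq ?_)
      rw [h3]
    have sum3 : ∑ t ∈ Finset.range T, γ t * (τ t / 2) * (‖l - lam t‖ ^ 2 - ‖l - lam (t + 1)‖ ^ 2)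
        ≤ γ 0 * τ 0 / 2 * ‖l - lam 0‖ ^ 2 - γ (T - 1) * τ (T - 1) / 2 * ‖l - lam T‖ ^ 2 := by
      have hle : ∀ t ∈ Finset.range T,
          γ t * (τ t / 2) * (‖l - lam t‖ ^ 2 - ‖l - lam (t + 1)‖ ^ 2)
            ≤ γ (t - 1) * τ (t - 1) / 2 * ‖l - lam t‖ ^ 2
              - γ ((t + 1) - 1) * τ ((t + 1) - 1) / 2 * ‖l - lam (t + 1)‖ ^ 2 := by
        intro t _
        simp only [Nat.add_sub_cancel]
        nlinarith [mul_nonneg (sub_nonneg.mpr (hmτ t)) (sq_nonneg ‖l - lam t‖)]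
      have h3 := Finset.sum_range_sub' (fun s => γ (s - 1) * τ (s - 1) / 2 * ‖l - lam s‖ ^ 2) T
      beta_reduce at h3
      refine (Finset.sum_le_sum hle).trans (le_of_eq ?_)
      rw [h3]
    have hET : γ (T - 1) * E T
        ≤ γ (T - 1) / (2 * η (T - 1)) * ‖F (x T) - F (xm T)‖ ^ 2
          + γ (T - 1) * η (T - 1) / 2 * ‖z - x T‖ ^ 2
          + γ (T - 1) / (2 * τ (T - 1)) * ‖ell T - ellm T‖ ^ 2
          + γ (T - 1) * τ (T - 1) / 2 * ‖l - lam T‖ ^ 2 := by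
      have e1 : E T = ⟪F (x T) - F (xm T), x T - z⟫_ℝ + ⟪l - lam T, ell T - ellm T⟫_ℝ := by
        simp only [hEdef]
      have h1 : ⟪F (x T) - F (xm T), x T - z⟫_ℝ ≤ ‖F (x T) - F (xm T)‖ * ‖z - x T‖ := by
        calc ⟪F (x T) - F (xm T), x T - z⟫_ℝ ≤ ‖F (x T) - F (xm T)‖ * ‖x T - z‖ :=
              real_inner_le_norm _ _
          _ = ‖F (x T) - F (xm T)‖ * ‖z - x T‖ := by rw [norm_sub_rev (x T) z]
      have h2 : ⟪l - lam T, ell T - ellm T⟫_ℝ ≤ ‖ell T - ellm T‖ * ‖l - lam T‖ := by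
        calc ⟪l - lam T, ell T - ellm T⟫_ℝ ≤ ‖l - lam T‖ * ‖ell T - ellm T‖ :=
              real_inner_le_norm _ _
          _ = ‖ell T - ellm T‖ * ‖l - lam T‖ := mul_comm _ _
      have y1 := young_aux ‖F (x T) - F (xm T)‖ ‖z - x T‖ (η (T - 1)) (hη (T - 1))
      have y2 := young_aux ‖ell T - ellm T‖ ‖l - lam T‖ (τ (T - 1)) (hτ (T - 1))
      have hγnn : (0:ℝ) ≤ γ (T - 1) := (hγ _).le
      have c1 := mul_le_mul_of_nonneg_left (h1.trans y1) hγnn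
      have c2 := mul_le_mul_of_nonneg_left (h2.trans y2) hγnn
      have e2 : γ (T - 1) * (‖F (x T) - F (xm T)‖ ^ 2 / (2 * η (T - 1))
            + η (T - 1) / 2 * ‖z - x T‖ ^ 2)
          = γ (T - 1) / (2 * η (T - 1)) * ‖F (x T) - F (xm T)‖ ^ 2
            + γ (T - 1) * η (T - 1) / 2 * ‖z - x T‖ ^ 2 := by ring
      have e3 : γ (T - 1) * (‖ell T - ellm T‖ ^ 2 / (2 * τ (T - 1))
            + τ (T - 1) / 2 * ‖l - lam T‖ ^ 2)
          = γ (T - 1) / (2 * τ (T - 1)) * ‖ell T - ellm T‖ ^ 2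
            + γ (T - 1) * τ (T - 1) / 2 * ‖l - lam T‖ ^ 2 := by ring
      rw [e1]
      linarith [c1, c2, e2, e3]
    have hMTval : opconexMT γ η τ θ Lg Hg F x xm lam ell ellm T 0
        = (∑ t ∈ Finset.range T,
            (γ t * θ t * ⟪F (x t) - F (xm t), x t - x (t + 1)⟫_ℝ
              + γ t * θ t * ⟪ell t - ellm t, lam (t + 1) - lam t⟫_ℝ
              - γ t * (η t - Lg * 0) / 2 * ‖x (t + 1) - x t‖ ^ 2
              - γ t * τ t / 2 * ‖lam t - lam (t + 1)‖ ^ 2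
              + 0 * Hg * γ t * ‖x (t + 1) - x t‖))
          + γ (T - 1) / (2 * η (T - 1)) * ‖F (x T) - F (xm T)‖ ^ 2
          + γ (T - 1) / (2 * τ (T - 1)) * ‖ell T - ellm T‖ ^ 2 := rfl
    have hlam0norm : γ 0 * τ 0 / 2 * ‖l - lam 0‖ ^ 2 = γ 0 * τ 0 / 2 * ‖l‖ ^ 2 := by
      rw [hlam0, sub_zero]
    linarith [hsum, sum1, sum2, sum3, hET, hMTval, hlam0norm]
  constructor
  · -- part (i)
    intro z hz hgz
    have hk := key z hz 0 (fun j => le_rfl)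
    have hlow : ∀ t ∈ Finset.range T, γ t * ⟪F z, x (t + 1) - z⟫_ℝ
        ≤ γ t * (⟪F (x (t + 1)), x (t + 1) - z⟫_ℝ + ⟪(0:Euc m), ell (t + 1)⟫_ℝ
            - ⟪lam (t + 1), g z⟫_ℝ) := by
      intro t _
      refine mul_le_mul_of_nonneg_left ?_ (hγ t).le
      have h1 : ⟪F z, x (t + 1) - z⟫_ℝ ≤ ⟪F (x (t + 1)), x (t + 1) - z⟫_ℝ := by
        have h := hFmono (x (t + 1)) (hxS t) z hz
        rw [inner_sub_left] at h
        linarith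
      have h2 : ⟪(0:Euc m), ell (t + 1)⟫_ℝ = 0 := inner_zero_left _
      have h3 : ⟪lam (t + 1), g z⟫_ℝ ≤ 0 := by
        rw [euc_inner_eq]
        exact Finset.sum_nonpos fun j _ =>
          mul_nonpos_iff.mpr (Or.inl ⟨hlamPos t j, hgz j⟩)
      linarith
    have hsl := Finset.sum_le_sum hlow
    have hz0 : γ 0 * τ 0 / 2 * ‖(0:Euc m)‖ ^ 2 = 0 := by simp
    have hf := hΓF z
    linarith [hsl, hk, hz0, hf]
  · -- part (ii)
    classical
    set a : ℝ := ‖lamstar‖ + 1 with hadef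
    clear_value a
    have hapos : 0 < a := by
      rw [hadef]
      positivity
    set v : Euc m := posPart (g xb) with hvdef
    have hv : ∀ j, v j = max (g xb j) 0 := fun j => rfl
    clear_value v
    have hvnn : ∀ j, 0 ≤ v j := fun j => by rw [hv]; exact le_max_right _ _
    have hgv : ∀ j, g xb j ≤ v j := fun j => by rw [hv]; exact le_max_left _ _
    have hvinner : ⟪v, g xb⟫_ℝ = ‖v‖ ^ 2 := by
      rw [← real_inner_self_eq_norm_sq, euc_inner_eq, euc_inner_eq]
      refine Finset.sum_congr rfl fun j _ => ?_
      rw [hv]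
      rcases le_or_gt (g xb j) 0 with h | h
      · rw [max_eq_right h]
        ring
      · rw [max_eq_left h.le]
    set l : Euc m := if v = (0 : Euc m) then 0 else (a / ‖v‖) • v with hldef
    clear_value l
    have hlnn : ∀ j, 0 ≤ l j := by
      intro j
      rw [hldef]
      split_ifs with h
      · exact le_rfl
      · have e : ((a / ‖v‖) • v) j = (a / ‖v‖) * v j := rfl
        rw [e]
        exact mul_nonneg (div_nonneg hapos.le (norm_nonneg v)) (hvnn j)
    have hlnorm : ‖l‖ ≤ a := by
      rw [hldef]
      split_ifs with h
      · simpa using hapos.le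
      · have hvpos : 0 < ‖v‖ := norm_pos_iff.mpr h
        rw [norm_smul, Real.norm_eq_abs, abs_of_nonneg (div_nonneg hapos.le hvpos.le),
          div_mul_cancel₀ _ (ne_of_gt hvpos)]
    have hlinner : ⟪l, g xb⟫_ℝ = a * ‖v‖ := by
      rw [hldef]
      split_ifs with h
      · rw [h]
        simp
      · have hvpos : 0 < ‖v‖ := norm_pos_iff.mpr h
        rw [real_inner_smul_left, hvinner]
        field_simp
    have hls0 : ⟪lamstar, g xstar⟫_ℝ = 0 := by
      have h1 := hsaddle₂ 0 (fun j => le_rfl)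
      rw [inner_zero_left] at h1
      have h2 := hsaddle₂ ((2:ℝ) • lamstar) (fun j => by
        have e : ((2:ℝ) • lamstar) j = 2 * lamstar j := rfl
        rw [e]
        exact mul_nonneg (by norm_num) (hlamstar j))
      rw [real_inner_smul_left] at h2
      linarith
    have hgstar : ∀ j, g xstar j ≤ 0 := by
      intro j
      have hnn : ∀ j', 0 ≤ (EuclideanSpace.single j (1:ℝ)) j' := by
        intro j'
        rw [EuclideanSpace.single_apply]
        split_ifs
        · exact zero_le_one
        · exact le_rfl
      have h := hsaddle₂ (EuclideanSpace.single j (1:ℝ)) hnn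
      rw [hls0] at h
      have e : ⟪EuclideanSpace.single j (1:ℝ), g xstar⟫_ℝ = g xstar j := by
        rw [euc_inner_eq]
        simp [EuclideanSpace.single_apply]
      rw [e] at h
      exact h
    have hFxb : -⟪lamstar, g xb⟫_ℝ ≤ ⟪F xstar, xb - xstar⟫_ℝ := by
      have h := hsaddle₁ xb hxbX
      rw [inner_sub_right]
      linarith [hls0]
    have hstar_v : ⟪lamstar, g xb⟫_ℝ ≤ ‖lamstar‖ * ‖v‖ :=
      (euc_inner_mono hlamstar hgv).trans (real_inner_le_norm _ _)
    have hjen : ∀ w : Euc m, (∀ j, 0 ≤ w j) →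
        Γ * ⟪w, g xb⟫_ℝ ≤ ∑ t ∈ Finset.range T, γ t * ⟪w, g (x (t + 1))⟫_ℝ := by
      intro w hw
      have hj : ∀ j, Γ * g xb j ≤ ∑ t ∈ Finset.range T, γ t * g (x (t + 1)) j := by
        intro j
        have hper : ∀ t ∈ Finset.range T,
            γ t * g xb j + γ t * ⟪Gg xb j, x (t + 1) - xb⟫_ℝ ≤ γ t * g (x (t + 1)) j := by
          intro t _
          have h := hgconv xb hxbX (x (t + 1)) (hxS t) j
          have h2 := mul_le_mul_of_nonneg_left h (hγ t).le
          linarith [h2]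
        have hsum := Finset.sum_le_sum hper
        rw [Finset.sum_add_distrib] at hsum
        have e1 : ∑ t ∈ Finset.range T, γ t * g xb j = Γ * g xb j := by
          rw [← Finset.sum_mul, ← hΓdef]
        have e2 : ∑ t ∈ Finset.range T, γ t * ⟪Gg xb j, x (t + 1) - xb⟫_ℝ = 0 := by
          have e3 : ∀ t, γ t * ⟪Gg xb j, x (t + 1) - xb⟫_ℝ
              = ⟪Gg xb j, γ t • x (t + 1)⟫_ℝ - γ t * ⟪Gg xb j, xb⟫_ℝ := by
            intro t
            rw [real_inner_smul_right, inner_sub_right]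
            ring
          simp_rw [e3]
          rw [Finset.sum_sub_distrib, ← inner_sum, hsum_xb, real_inner_smul_right,
            ← Finset.sum_mul, ← hΓdef]
          ring
        rw [e1, e2] at hsum
        linarith
      have eL : Γ * ⟪w, g xb⟫_ℝ = ∑ j, w j * (Γ * g xb j) := by
        rw [euc_inner_eq, Finset.mul_sum]
        exact Finset.sum_congr rfl fun j _ => by ring
      have eR : ∑ t ∈ Finset.range T, γ t * ⟪w, g (x (t + 1))⟫_ℝ
          = ∑ j, w j * ∑ t ∈ Finset.range T, γ t * g (x (t + 1)) j := by
        calc ∑ t ∈ Finset.range T, γ t * ⟪w, g (x (t + 1))⟫_ℝ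
            = ∑ t ∈ Finset.range T, ∑ j, w j * (γ t * g (x (t + 1)) j) := by
              refine Finset.sum_congr rfl fun t _ => ?_
              rw [euc_inner_eq, Finset.mul_sum]
              exact Finset.sum_congr rfl fun j _ => by ring
          _ = ∑ j, ∑ t ∈ Finset.range T, w j * (γ t * g (x (t + 1)) j) := Finset.sum_comm
          _ = ∑ j, w j * ∑ t ∈ Finset.range T, γ t * g (x (t + 1)) j :=
              Finset.sum_congr rfl fun j _ => (Finset.mul_sum _ _ _).symm
      rw [eL, eR]
      exact Finset.sum_le_sum fun j _ => mul_le_mul_of_nonneg_left (hj j) (hw j)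
    have hdel : ∀ t, ⟪l, g (x (t + 1)) - ell (t + 1)⟫_ℝ
        ≤ a * (Lg / 2 * ‖x (t + 1) - x t‖ ^ 2 + Hg * ‖x (t + 1) - x t‖) := by
      intro t
      have h1 : g (x (t + 1)) - ell (t + 1)
          = g (x (t + 1)) - g (x t) - gradT (Gg (x t)) (x (t + 1) - x t) := by
        rw [hell t]
        abel
      calc ⟪l, g (x (t + 1)) - ell (t + 1)⟫_ℝ
          ≤ ‖l‖ * ‖g (x (t + 1)) - ell (t + 1)‖ := real_inner_le_norm _ _
        _ ≤ a * (Lg / 2 * ‖x (t + 1) - x t‖ ^ 2 + Hg * ‖x (t + 1) - x t‖) := by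
            refine mul_le_mul hlnorm ?_ (norm_nonneg _) hapos.le
            rw [h1]
            exact hgsmooth (x (t + 1)) (hxS t) (x t) (hxX t)
    have hMT : opconexMT γ η τ θ Lg Hg F x xm lam ell ellm T a
        = opconexMT γ η τ θ Lg Hg F x xm lam ell ellm T 0
          + ∑ t ∈ Finset.range T,
              a * (γ t * (Lg / 2 * ‖x (t + 1) - x t‖ ^ 2 + Hg * ‖x (t + 1) - x t‖)) := by
      simp only [opconexMT]
      rw [show ∀ s1 s2 c1 c2 d : ℝ, s1 + c1 + c2 = s2 + c1 + c2 + d ↔ s1 = s2 + d from by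
        intro s1 s2 c1 c2 d
        constructor <;> intro <;> linarith]
      rw [← Finset.sum_add_distrib]
      refine Finset.sum_congr rfl fun t _ => ?_
      ring
    have hk := key xstar hxstar l hlnn
    have hsplit : ∑ t ∈ Finset.range T, γ t *
        (⟪F (x (t + 1)), x (t + 1) - xstar⟫_ℝ + ⟪l, ell (t + 1)⟫_ℝ - ⟪lam (t + 1), g xstar⟫_ℝ)
        = (∑ t ∈ Finset.range T, γ t * ⟪F (x (t + 1)), x (t + 1) - xstar⟫_ℝ)
          + (∑ t ∈ Finset.range T, γ t * ⟪l, ell (t + 1)⟫_ℝ)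
          - ∑ t ∈ Finset.range T, γ t * ⟪lam (t + 1), g xstar⟫_ℝ := by
      rw [← Finset.sum_add_distrib, ← Finset.sum_sub_distrib]
      exact Finset.sum_congr rfl fun t _ => by ring
    have m1 : ∑ t ∈ Finset.range T, γ t * ⟪F xstar, x (t + 1) - xstar⟫_ℝ
        ≤ ∑ t ∈ Finset.range T, γ t * ⟪F (x (t + 1)), x (t + 1) - xstar⟫_ℝ := by
      refine Finset.sum_le_sum fun t _ => mul_le_mul_of_nonneg_left ?_ (hγ t).le
      have h := hFmono (x (t + 1)) (hxS t) xstar hxstar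
      rw [inner_sub_left] at h
      linarith
    have m2 := mul_le_mul_of_nonneg_left hFxb hΓpos.le
    have m3 := mul_le_mul_of_nonneg_left hstar_v hΓpos.le
    have hfx := hΓF xstar
    have c2a : ∀ t ∈ Finset.range T,
        γ t * ⟪l, g (x (t + 1))⟫_ℝ
          - a * (γ t * (Lg / 2 * ‖x (t + 1) - x t‖ ^ 2 + Hg * ‖x (t + 1) - x t‖))
          ≤ γ t * ⟪l, ell (t + 1)⟫_ℝ := by
      intro t _
      have h1 : ⟪l, g (x (t + 1))⟫_ℝ - ⟪l, ell (t + 1)⟫_ℝ = ⟪l, g (x (t + 1)) - ell (t + 1)⟫_ℝ := by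
        rw [inner_sub_right]
      have h2 := mul_le_mul_of_nonneg_left ((le_of_eq h1).trans (hdel t)) (hγ t).le
      have h3 : γ t * (a * (Lg / 2 * ‖x (t + 1) - x t‖ ^ 2 + Hg * ‖x (t + 1) - x t‖))
          = a * (γ t * (Lg / 2 * ‖x (t + 1) - x t‖ ^ 2 + Hg * ‖x (t + 1) - x t‖)) := by ring
      rw [h3] at h2
      linarith [h2]
    have c2b := Finset.sum_le_sum c2a
    rw [Finset.sum_sub_distrib] at c2b
    have c2c := hjen l hlnn
    have hlinnerΓ : Γ * ⟪l, g xb⟫_ℝ = Γ * (a * ‖v‖) := by rw [hlinner]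
    have c3 : ∑ t ∈ Finset.range T, γ t * ⟪lam (t + 1), g xstar⟫_ℝ ≤ 0 := by
      refine Finset.sum_nonpos fun t _ => ?_
      refine mul_nonpos_iff.mpr (Or.inl ⟨(hγ t).le, ?_⟩)
      rw [euc_inner_eq]
      exact Finset.sum_nonpos fun j _ =>
        mul_nonpos_iff.mpr (Or.inl ⟨hlamPos t j, hgstar j⟩)
    have hl2 : γ 0 * τ 0 / 2 * ‖l‖ ^ 2 ≤ γ 0 * τ 0 / 2 * a ^ 2 := by
      refine mul_le_mul_of_nonneg_left ?_
        (div_nonneg (mul_nonneg (hγ 0).le (hτ 0).le) (by norm_num))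
      nlinarith [hlnorm, norm_nonneg l]
    have hgoal_eq : Γ * (a * ‖v‖) - Γ * (‖lamstar‖ * ‖v‖) = Γ * ‖v‖ := by
      rw [hadef]
      ring
    linarith [hk, hsplit, m1, m2, m3, hfx, c2b, c2c, hlinnerΓ, c3, hl2, hgoal_eq, hMT]

end
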